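/- arXiv:2309.05979 — 3 statements merged into one kernel-verified Lean document; each statement's English description precedes it below -/
import Mathlib

section
/- Let A be an n×n real matrix, u ≠ v indices with A_{u,j} = A_{v,j} for all j ∉ {u,v}. Set c = A_{v,u}, a_u = A_{u,u}, a_v = A_{v,v}, b = A_{u,v}. Define P = (c − a_u)x_u + (a_v − b)x_v, K_{u,v} = 1 − (h/2)((Ax)_v + (a_v − b)x_v), K_{v,u} = 1 − (h/2)((Ax)_u + (a_u − c)x_u), and L = 1 − (h/2)((Ax)_u − (a_u − c)x_u). Then (c − a_u)x_u·K_{u,v} + (a_v − b)x_v·K_{v,u} = P·L as polynomials in x₁,…,x_n. -/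
lemma mulVec_diff {n : ℕ} (A : Matrix (Fin n) (Fin n) ℝ) (u v : Fin n)
    (huv : u ≠ v) (hrow : ∀ j, j ≠ u → j ≠ v → A u j = A v j) (x : Fin n → ℝ) :
    A.mulVec x v - A.mulVec x u
      = (A v u - A u u) * x u + (A v v - A u v) * x v := by
  simp only [Matrix.mulVec, dotProduct]
  rw [← Finset.sum_sub_distrib]
  have : ∀ j ∈ Finset.univ, A v j * x j - A u j * x j
      = (if j = u then (A v u - A u u) * x u else 0)
        + (if j = v then (A v v - A u v) * x v else 0) := by
    intro j _
    by_cases hju : j = u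
    · subst hju; simp [huv]; ring
    · by_cases hjv : j = v
      · subst hjv; simp [hju]; ring
      · simp [hju, hjv, hrow j hju hjv]
  rw [Finset.sum_congr rfl this, Finset.sum_add_distrib]
  simp

/-- Key algebraic identity for the cofactor of the edge Darboux polynomial
under the Kahan map: `(c−a_u)x_u·K_{u,v} + (a_v−b)x_v·K_{v,u} = P·L`. -/
theorem stmt_7 {n : ℕ} (A : Matrix (Fin n) (Fin n) ℝ) (h : ℝ) (u v : Fin n)
    (huv : u ≠ v) (hrow : ∀ j, j ≠ u → j ≠ v → A u j = A v j) :
    ∀ x : Fin n → ℝ,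
      (A v u - A u u) * x u *
          (1 - h / 2 * (A.mulVec x v + (A v v - A u v) * x v))
        + (A v v - A u v) * x v *
          (1 - h / 2 * (A.mulVec x u + (A u u - A v u) * x u))
      = ((A v u - A u u) * x u + (A v v - A u v) * x v) *
          (1 - h / 2 * (A.mulVec x u - (A u u - A v u) * x u)) := by
  intro x
  have key := mulVec_diff A u v huv hrow x
  have : A.mulVec x v = A.mulVec x u + (A v u - A u u) * x u + (A v v - A u v) * x v := by
    linarith
  rw [this]; ring
end

section
/- Let T be a tree on n vertices with edges e_i = (u_i, v_i), i = 1,…,n−1, and let A be the adjacency matrix of the associated weighted complete digraph, i.e., A satisfies A_{u_i,j} = A_{v_i,j} for all j ∉ {u_i,v_i} and each edge e_i. Let B be the (n−1)×n matrix with B_{i,j} = A_{j,j} if j ∈ {u_i,v_i} and B_{i,j} = A_{u_i,j} otherwise, let m_i be the degree of vertex i, and let a = (A_{1,1},…,A_{n,n}). Then for every p ∈ {1,…,n}: Σ_{i=1}^n (1 − m_i) A_{i,p} + Σ_{i=1}^{n−1} B_{i,p} − A_{p,p} = 0. -/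
/-- The key identity proving measure preservation for Lotka--Volterra
tree-systems: for each vertex `p`,
`Σ_i (1 − m_i) A_{i,p} + Σ_i B_{i,p} − A_{p,p} = 0`. -/
theorem stmt_11 {n : ℕ} (hn : 1 ≤ n) (G : SimpleGraph (Fin n)) [DecidableRel G.Adj]
    (hG : G.IsTree) (e : Fin (n - 1) → Fin n × Fin n)
    (hadj : ∀ i, G.Adj (e i).1 (e i).2)
    (hinj : Function.Injective fun i => s((e i).1, (e i).2))
    (hsurj : ∀ ed ∈ G.edgeSet, ∃ i, s((e i).1, (e i).2) = ed)
    (A : Matrix (Fin n) (Fin n) ℝ)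
    (hA : ∀ i : Fin (n - 1), ∀ j, j ≠ (e i).1 → j ≠ (e i).2 →
      A (e i).1 j = A (e i).2 j)
    (B : Fin (n - 1) → Fin n → ℝ)
    (hB : ∀ i j, B i j = if j = (e i).1 ∨ j = (e i).2 then A j j else A (e i).1 j) :
    ∀ p : Fin n,
      (∑ i, (1 - (G.degree i : ℝ)) * A i p) + (∑ i, B i p) - A p p = 0 := by
  intro p
  classical
  have hconn : G.Connected := hG.isConnected
  -- every vertex ≠ p has a neighbor strictly closer to p
  have hpar : ∀ i : Fin n, i ≠ p → ∃ j, G.Adj i j ∧ G.dist j p + 1 = G.dist i p := by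
    intro i hi
    obtain ⟨w, hw⟩ := (hconn.preconnected i p).exists_walk_length_eq_dist
    cases w with
    | nil => exact absurd rfl hi
    | @cons _ j _ h q =>
      refine ⟨j, h, ?_⟩
      have h1 : G.dist j p ≤ q.length := SimpleGraph.dist_le q
      have h2 : G.dist i p ≤ G.dist i j + G.dist j p := hconn.dist_triangle
      have h3 : G.dist i j ≤ 1 := by
        have := SimpleGraph.dist_le (SimpleGraph.Walk.cons h SimpleGraph.Walk.nil)
        simpa using this
      simp only [SimpleGraph.Walk.length_cons] at hw
      omega
  choose par hpadj hpd using hpar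
  -- the edge from i to its parent
  have hmem : ∀ i (hi : i ≠ p), s(i, par i hi) ∈ G.edgeSet := fun i hi =>
    G.mem_edgeSet.mpr (hpadj i hi)
  choose k hk using fun i hi => hsurj _ (hmem i hi)
  set φ : {i : Fin n // i ≠ p} → Fin (n - 1) := fun i => k i.1 i.2 with hφ
  have hφinj : Function.Injective φ := by
    rintro ⟨i1, h1⟩ ⟨i2, h2⟩ h
    have he : s(i1, par i1 h1) = s(i2, par i2 h2) := by
      rw [← hk i1 h1, ← hk i2 h2]
      simp only [hφ] at h
      rw [h]
    rw [Sym2.eq_iff] at he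
    rcases he with ⟨rfl, -⟩ | ⟨he1, he2⟩
    · rfl
    · exfalso
      have d1 := hpd i1 h1
      have d2 := hpd i2 h2
      rw [← he1] at d2
      rw [he2] at d1
      omega
  have hcard : Fintype.card {i : Fin n // i ≠ p} = n - 1 := by
    simp [Fintype.card_subtype_compl]
  have hφbij : Function.Bijective φ := by
    rw [Fintype.bijective_iff_injective_and_card]
    exact ⟨hφinj, by simp [hcard]⟩
  -- key value property
  have hg : ∀ (i : Fin n) (hi : i ≠ p),
      A (e (k i hi)).1 p + A (e (k i hi)).2 p - B (k i hi) p = A i p := by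
    intro i hi
    set k0 := k i hi with hk0
    have he : s((e k0).1, (e k0).2) = s(i, par i hi) := hk i hi
    have hne : (e k0).1 ≠ (e k0).2 := (hadj k0).ne
    rw [Sym2.eq_iff] at he
    rw [hB]
    by_cases hp : p = (e k0).1 ∨ p = (e k0).2
    · rw [if_pos hp]
      rcases he with ⟨h1, h2⟩ | ⟨h1, h2⟩
      · rcases hp with hp | hp
        · exact absurd (hp.trans h1).symm hi
        · rw [h1, ← hp]; ring
      · rcases hp with hp | hp
        · rw [h2, ← hp]; ring
        · exact absurd (hp.trans h2).symm hi
    · rw [if_neg hp]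
      push_neg at hp
      have hAA := hA k0 p hp.1 hp.2
      rcases he with ⟨h1, h2⟩ | ⟨h1, h2⟩
      · rw [← hAA, h1]; ring
      · rw [h2]; ring
  -- degree as a sum over edges
  have hdeg : ∀ i : Fin n, (G.degree i : ℝ) =
      ∑ k : Fin (n - 1), if i = (e k).1 ∨ i = (e k).2 then (1 : ℝ) else 0 := by
    intro i
    rw [Finset.sum_boole]
    norm_cast
    rw [← SimpleGraph.card_incidenceFinset_eq_degree]
    symm
    apply Finset.card_bij (fun ed _ => s((e ed).1, (e ed).2))
    · intro ed hed
      simp only [Finset.mem_filter, Finset.mem_univ, true_and] at hed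
      rw [SimpleGraph.mem_incidenceFinset]
      exact ⟨G.mem_edgeSet.mpr (hadj ed), Sym2.mem_iff.mpr hed⟩
    · intro a ha b hb hab
      exact hinj hab
    · intro ed hed
      rw [SimpleGraph.mem_incidenceFinset] at hed
      obtain ⟨k0, hk0⟩ := hsurj ed hed.1
      refine ⟨k0, ?_, hk0⟩
      simp only [Finset.mem_filter, Finset.mem_univ, true_and]
      rw [← Sym2.mem_iff, hk0]
      exact hed.2
  -- main computation
  have step1 : ∑ i, (G.degree i : ℝ) * A i p
      = ∑ k : Fin (n - 1), (A (e k).1 p + A (e k).2 p) := by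
    simp only [hdeg, Finset.sum_mul]
    rw [Finset.sum_comm]
    refine Finset.sum_congr rfl fun k0 _ => ?_
    have hne : (e k0).1 ≠ (e k0).2 := (hadj k0).ne
    have : ∀ i : Fin n, (if i = (e k0).1 ∨ i = (e k0).2 then (1:ℝ) else 0) * A i p
        = (if i = (e k0).1 then A i p else 0) + (if i = (e k0).2 then A i p else 0) := by
      intro i
      by_cases h1 : i = (e k0).1 <;> by_cases h2 : i = (e k0).2 <;>
        simp_all
    simp only [this, Finset.sum_add_distrib, Finset.sum_ite_eq', Finset.mem_univ, if_true]
  have step2 : ∑ k : Fin (n - 1), (A (e k).1 p + A (e k).2 p - B k p)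
      = ∑ i ∈ Finset.univ.erase p, A i p := by
    have hb := Fintype.sum_bijective φ hφbij (fun i : {i : Fin n // i ≠ p} => A (i : Fin n) p)
      (fun k => A (e k).1 p + A (e k).2 p - B k p) (fun i => (hg i.1 i.2).symm)
    rw [← hb]
    exact (Finset.sum_subtype (Finset.univ.erase p)
      (fun x => by simp [Finset.mem_erase]) (fun i => A i p)).symm
  have step3 : ∑ i, A i p = A p p + ∑ i ∈ Finset.univ.erase p, A i p :=
    (Finset.add_sum_erase _ _ (Finset.mem_univ p)).symm
  have expand : ∑ i, (1 - (G.degree i : ℝ)) * A i p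
      = ∑ i, A i p - ∑ i, (G.degree i : ℝ) * A i p := by
    rw [← Finset.sum_sub_distrib]
    exact Finset.sum_congr rfl fun i _ => by ring
  rw [expand, step1, step3]
  have : ∑ k : Fin (n-1), (A (e k).1 p + A (e k).2 p)
      = ∑ k : Fin (n-1), (A (e k).1 p + A (e k).2 p - B k p) + ∑ i, B i p := by
    rw [← Finset.sum_add_distrib]
    exact Finset.sum_congr rfl fun i _ => by ring
  rw [this, step2]
  ring
end

section
/- Let G be a graph and let v₁,…,v_ℓ (ℓ ≥ 3) be the vertices of a cycle in G. Let A be an n×n matrix satisfying, for each cycle edge (v_t, v_{t+1}) (indices mod ℓ): A_{v_t,k} = A_{v_{t+1},k} for all k ∉ {v_t, v_{t+1}}. Then for every pair of distinct cycle vertices v_i, v_j and every k ∉ {v_i, v_j}, A_{v_i,k} = A_{v_j,k}. -/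
private lemma chain_13 {n ℓ : ℕ} (A : Matrix (Fin n) (Fin n) ℝ)
    (v : ZMod ℓ → Fin n)
    (hA : ∀ t : ZMod ℓ, ∀ k, k ≠ v t → k ≠ v (t + 1) → A (v t) k = A (v (t + 1)) k)
    (k : Fin n) :
    ∀ m : ℕ, ∀ i : ZMod ℓ, (∀ r ≤ m, k ≠ v (i + (r : ℕ))) →
      A (v i) k = A (v (i + (m : ℕ))) k := by
  intro m
  induction m with
  | zero => intro i _; simp
  | succ m ih =>
    intro i h
    have h1 : A (v i) k = A (v (i + (m : ℕ))) k :=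
      ih i (fun r hr => h r (le_trans hr (Nat.le_succ m)))
    have h2 := hA (i + (m : ℕ)) k (h m (Nat.le_succ m)) ?_
    · rw [h1, h2]
      congr 1
      push_cast
      ring
    · have := h (m + 1) le_rfl
      have e : i + ((m + 1 : ℕ) : ZMod ℓ) = i + (m : ℕ) + 1 := by push_cast; ring
      rwa [e] at this

/-- If the edge conditions hold along all edges of a cycle `v₁,…,v_ℓ` (`ℓ ≥ 3`),
then they hold for every pair of distinct vertices of the cycle. -/
theorem stmt_13 {n ℓ : ℕ} (hℓ : 3 ≤ ℓ) (A : Matrix (Fin n) (Fin n) ℝ)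
    (v : ZMod ℓ → Fin n) (hv : Function.Injective v)
    (hA : ∀ t : ZMod ℓ, ∀ k, k ≠ v t → k ≠ v (t + 1) → A (v t) k = A (v (t + 1)) k) :
    ∀ i j : ZMod ℓ, i ≠ j → ∀ k, k ≠ v i → k ≠ v j → A (v i) k = A (v j) k := by
  have : NeZero ℓ := ⟨by omega⟩
  intro i j hij k hki hkj
  set m := (j - i).val with hm
  set m' := (i - j).val with hm'
  have hji : j - i ≠ 0 := sub_ne_zero.mpr (Ne.symm hij)
  have hmlt : m < ℓ := ZMod.val_lt _
  have hm0 : m ≠ 0 := by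
    intro h0
    exact hji (by rwa [← ZMod.val_eq_zero])
  have hmm' : m' = ℓ - m := by
    have : i - j = -(j - i) := by ring
    rw [hm', this, ZMod.neg_val, if_neg hji]
  have hj : i + (m : ℕ) = j := by
    rw [hm, ZMod.natCast_val, ZMod.cast_id]; ring
  have hi : j + (m' : ℕ) = i := by
    rw [hm', ZMod.natCast_val, ZMod.cast_id]; ring
  by_cases hcase : ∀ r ≤ m, k ≠ v (i + (r : ℕ))
  · have := chain_13 A v hA k m i hcase
    rwa [hj] at this
  · push_neg at hcase
    obtain ⟨r0, hr0m, hr0⟩ := hcase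
    have hr00 : r0 ≠ 0 := by
      intro h; apply hki; rw [hr0, h]; norm_num
    have hr0m' : r0 ≠ m := by
      intro h; apply hkj; rw [hr0, h, hj]
    -- go the other way
    have hav : ∀ r ≤ m', k ≠ v (j + (r : ℕ)) := by
      intro r hr hk
      have heq : i + (r0 : ℕ) = j + (r : ℕ) := hv (hr0 ▸ hk)
      rw [← hj] at heq
      have heq2 : ((r0 : ℕ) : ZMod ℓ) = ((m + r : ℕ) : ZMod ℓ) := by
        push_cast at heq ⊢
        linear_combination heq
      have hmod := (ZMod.natCast_eq_natCast_iff _ _ _).mp heq2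
      have : r0 % ℓ = (m + r) % ℓ := hmod
      have hr0lt : r0 < ℓ := lt_of_le_of_lt hr0m hmlt
      have hmr : m + r ≤ ℓ := by omega
      rcases lt_or_eq_of_le hmr with h | h
      · rw [Nat.mod_eq_of_lt hr0lt, Nat.mod_eq_of_lt h] at this
        omega
      · rw [Nat.mod_eq_of_lt hr0lt, h, Nat.mod_self] at this
        omega
    have := chain_13 A v hA k m' j hav
    rw [hi] at this
    exact this.symm
end
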